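/- Let N ≥ 2 be an integer, c ∈ (0,N), σ > 0, and set a = c/N, b = (N²/c − 1)/(N − 1), θ = σb. For an integer i ≥ 0 let p_t(i) = N^{−i}(δ_{0i} − 1)e^{−θ a^i t} + (N − 1) Σ_{j=i+1}^∞ N^{−j} e^{−θ a^j t} for t > 0, where δ_{0i} = 1 if i = 0 and 0 otherwise. Let j ≥ 1 be an integer with c^j > N^{j−1}. Then for every integer i ≥ 0 the integral (1/(j−1)!) ∫_0^∞ t^{j−1} p_t(i) dt converges absolutely and equals ((N−1)/(σ(N²/c − 1)))^j · [ δ_{0i} − 1 + (N−1)N^{j−1}/(c^j − N^{j−1}) ] · (N^{j−1}/c^j)^i. -/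

import Mathlib

open MeasureTheory Filter Topology

open scoped ENNReal NNReal

lemma gammaAux (q : ℕ) {l : ℝ} (hl : 0 < l) :
    IntegrableOn (fun t : ℝ => t ^ q * Real.exp (-(l * t))) (Set.Ioi 0) ∧
    ∫ t in Set.Ioi (0:ℝ), t ^ q * Real.exp (-(l * t)) = q.factorial / l ^ (q + 1) := by
  constructor
  · have h := integrableOn_rpow_mul_exp_neg_mul_rpow (p := 1) (s := (q:ℝ)) (b := l)
      (by exact neg_one_lt_zero.trans_le (Nat.cast_nonneg q)) one_pos hl
    refine h.congr_fun (fun x hx => ?_) measurableSet_Ioi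
    dsimp only
    rw [Real.rpow_one, Real.rpow_natCast, neg_mul]
  · have h := Real.integral_rpow_mul_exp_neg_mul_Ioi (a := (q:ℝ)+1) (r := l) (by positivity) hl
    rw [show ((q:ℝ)+1)-1 = (q:ℝ) by ring] at h
    have h2 : ∫ t in Set.Ioi (0:ℝ), t ^ q * Real.exp (-(l * t))
        = ∫ t in Set.Ioi (0:ℝ), t ^ ((q:ℝ)) * Real.exp (-(l * t)) := by
      refine setIntegral_congr_fun measurableSet_Ioi (fun x hx => ?_)
      rw [Real.rpow_natCast]
    rw [h2, h, Real.Gamma_nat_eq_factorial,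
      show ((q:ℝ)+1) = ((q+1:ℕ):ℝ) by push_cast; ring, Real.rpow_natCast,
      div_pow, one_pow]
    ring

lemma integrableTsumAux {μ : Measure ℝ} {F : ℕ → ℝ → ℝ}
    (hint : ∀ n, Integrable (F n) μ)
    (hsum : Summable fun n => ∫ a, ‖F n a‖ ∂μ) :
    Integrable (fun a => ∑' n, F n a) μ := by
  have hm : ∀ n, AEStronglyMeasurable (F n) μ := fun n => (hint n).1
  have hf'' : ∀ n, AEMeasurable (fun x => (‖F n x‖₊ : ℝ≥0∞)) μ := fun n => (hm n).enorm
  have hlint : ∑' n, ∫⁻ a, ‖F n a‖₊ ∂μ ≠ ⊤ := by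
    have h1 : ∀ n, ∫⁻ a, ‖F n a‖₊ ∂μ = ENNReal.ofReal (∫ a, ‖F n a‖ ∂μ) := fun n =>
      (ofReal_integral_norm_eq_lintegral_enorm (hint n)).symm
    simp_rw [h1]
    rw [← ENNReal.ofReal_tsum_of_nonneg (fun n => integral_nonneg (fun a => norm_nonneg _)) hsum]
    exact ENNReal.ofReal_ne_top
  have hlt : ∫⁻ a, ∑' n, (‖F n a‖₊ : ℝ≥0∞) ∂μ ≠ ⊤ := by
    rw [lintegral_tsum hf'']; exact hlint
  have hhh : ∀ᵐ a ∂μ, Summable fun n => ‖F n a‖ := by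
    filter_upwards [ae_lt_top' (AEMeasurable.ennreal_tsum hf'') hlt] with a ha
    have := ENNReal.tsum_coe_ne_top_iff_summable_coe.mp ha.ne
    simpa [coe_nnnorm] using this
  constructor
  · refine aestronglyMeasurable_of_tendsto_ae atTop
      (f := fun n a => ∑ k ∈ Finset.range n, F k a)
      (fun n => Finset.aestronglyMeasurable_fun_sum (Finset.range n) (fun k _ => hm k)) ?_
    filter_upwards [hhh] with a ha
    exact ha.of_norm.hasSum.tendsto_sum_nat
  · rw [HasFiniteIntegral]
    calc ∫⁻ a, ‖∑' n, F n a‖₊ ∂μ ≤ ∫⁻ a, ∑' n, (‖F n a‖₊ : ℝ≥0∞) ∂μ := by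
          apply lintegral_mono_ae
          filter_upwards [hhh] with a ha
          have hs : Summable fun n => ‖F n a‖₊ :=
            NNReal.summable_coe.mp (by simpa [coe_nnnorm] using ha)
          calc (‖∑' n, F n a‖₊ : ℝ≥0∞) ≤ ((∑' n, ‖F n a‖₊ : ℝ≥0) : ℝ≥0∞) :=
                ENNReal.coe_le_coe.2 (nnnorm_tsum_le hs)
            _ = ∑' n, (‖F n a‖₊ : ℝ≥0∞) := ENNReal.coe_tsum hs
      _ = ∑' n, ∫⁻ a, ‖F n a‖₊ ∂μ := lintegral_tsum hf''
      _ < ⊤ := hlint.lt_top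

theorem stmt15 (N : ℕ) (hN : 2 ≤ N) (c σ : ℝ) (hc0 : 0 < c) (hcN : c < N) (hσ : 0 < σ)
    (a b θ : ℝ)
    (ha : a = c / N) (hb : b = ((N:ℝ) ^ 2 / c - 1) / ((N:ℝ) - 1)) (hθ : θ = σ * b)
    (p : ℕ → ℝ → ℝ)
    (hp : ∀ (i : ℕ), ∀ t > 0, p i t =
      ((N:ℝ) ^ i)⁻¹ * ((if i = 0 then (1:ℝ) else 0) - 1) * Real.exp (-(θ * a ^ i * t)) +
        ((N:ℝ) - 1) *
          ∑' j : ℕ, ((N:ℝ) ^ (i + 1 + j))⁻¹ * Real.exp (-(θ * a ^ (i + 1 + j) * t)))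
    (j : ℕ) (hj : 1 ≤ j) (hcj : (N:ℝ) ^ (j - 1) < c ^ j) :
    ∀ i : ℕ,
      IntegrableOn (fun t : ℝ => t ^ (j - 1) * p i t) (Set.Ioi 0) ∧
      (1 / (Nat.factorial (j - 1) : ℝ)) * ∫ t in Set.Ioi (0:ℝ), t ^ (j - 1) * p i t =
        (((N:ℝ) - 1) / (σ * ((N:ℝ) ^ 2 / c - 1))) ^ j *
          ((if i = 0 then (1:ℝ) else 0) - 1 +
            ((N:ℝ) - 1) * (N:ℝ) ^ (j - 1) / (c ^ j - (N:ℝ) ^ (j - 1))) *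
          ((N:ℝ) ^ (j - 1) / c ^ j) ^ i := by
  have hN2 : (2:ℝ) ≤ (N:ℝ) := by exact_mod_cast hN
  have hN0 : (0:ℝ) < N := by linarith
  have hN1 : (1:ℝ) < N := by linarith
  have ha0 : 0 < a := by rw [ha]; positivity
  have ha1 : a < 1 := by rw [ha]; exact (div_lt_one hN0).2 hcN
  have hNc : 0 < (N:ℝ)^2/c - 1 := by
    have h1 : c < (N:ℝ)^2 := by nlinarith
    have := (one_lt_div hc0).2 h1
    linarith
  have hb0 : 0 < b := by rw [hb]; exact div_pos hNc (by linarith)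
  have hθ0 : 0 < θ := by rw [hθ]; exact mul_pos hσ hb0
  obtain ⟨q, rfl⟩ : ∃ q, j = q + 1 := ⟨j - 1, (Nat.succ_pred_eq_of_pos hj).symm⟩
  simp only [Nat.add_sub_cancel] at hcj ⊢
  intro i
  set r : ℝ := (N:ℝ)^q / c^(q+1) with hrdef
  have hr0 : 0 < r := div_pos (pow_pos hN0 _) (pow_pos hc0 _)
  have hr1 : r < 1 := (div_lt_one (pow_pos hc0 _)).2 hcj
  have hra : (N:ℝ) * a^(q+1) = c^(q+1)/(N:ℝ)^q := by
    rw [ha, div_pow]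
    field_simp
    ring
  have hr' : r = ((N:ℝ) * a^(q+1))⁻¹ := by rw [hrdef, hra, inv_div]
  have hval : ∀ m : ℕ, ((N:ℝ)^m)⁻¹ * ((q.factorial:ℝ) / (θ * a^m)^(q+1))
      = (q.factorial:ℝ) * (θ⁻¹^(q+1) * r^m) := by
    intro m
    rw [hr', mul_pow θ (a^m), pow_right_comm, div_eq_mul_inv, mul_inv, mul_inv, mul_pow,
      inv_pow, inv_pow, inv_pow]
    ring
  have hlampos : ∀ m : ℕ, 0 < θ * a ^ m := fun m => mul_pos hθ0 (pow_pos ha0 m)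
  set F : ℕ → ℝ → ℝ := fun k t =>
    ((N:ℝ)^(i+1+k))⁻¹ * (t^q * Real.exp (-(θ * a^(i+1+k) * t))) with hFdef
  have hFint : ∀ k, Integrable (F k) (volume.restrict (Set.Ioi 0)) := fun k =>
    Integrable.const_mul ((gammaAux q (hlampos (i+1+k))).1) _
  have hFval : ∀ k, ∫ t in Set.Ioi (0:ℝ), F k t
      = (q.factorial:ℝ) * (θ⁻¹^(q+1) * r^(i+1+k)) := by
    intro k
    simp only [hFdef]
    rw [integral_const_mul, (gammaAux q (hlampos (i+1+k))).2]
    exact hval (i+1+k)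
  have hFnorm : ∀ k, (∫ t in Set.Ioi (0:ℝ), ‖F k t‖) = ∫ t in Set.Ioi (0:ℝ), F k t := by
    intro k
    refine setIntegral_congr_fun measurableSet_Ioi (fun t ht => ?_)
    have ht0 : (0:ℝ) ≤ t := le_of_lt ht
    exact Real.norm_of_nonneg (mul_nonneg (inv_nonneg.2 (pow_nonneg hN0.le _))
      (mul_nonneg (pow_nonneg ht0 _) (Real.exp_nonneg _)))
  have hFsum : Summable (fun k => ∫ t in Set.Ioi (0:ℝ), ‖F k t‖) := by
    have hg : Summable (fun k : ℕ => r ^ (i+1+k)) :=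
      ((summable_geometric_of_lt_one hr0.le hr1).mul_left (r^(i+1))).congr
        (fun k => (pow_add r (i+1) k).symm)
    refine Summable.congr ((hg.mul_left (θ⁻¹^(q+1))).mul_left (q.factorial:ℝ))
      (fun k => ?_)
    rw [hFnorm k, hFval k]
  have htsumInt : Integrable (fun t => ∑' k, F k t) (volume.restrict (Set.Ioi 0)) :=
    integrableTsumAux hFint hFsum
  have hswap : ∑' k, ∫ t in Set.Ioi (0:ℝ), F k t = ∫ t in Set.Ioi (0:ℝ), ∑' k, F k t :=
    integral_tsum_of_summable_integral_norm hFint hFsum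
  set G0 : ℝ → ℝ := fun t =>
    (((N:ℝ)^i)⁻¹ * ((if i = 0 then (1:ℝ) else 0) - 1)) * (t^q * Real.exp (-(θ * a^i * t)))
    with hG0def
  have hG0int : Integrable G0 (volume.restrict (Set.Ioi 0)) :=
    Integrable.const_mul ((gammaAux q (hlampos i)).1) _
  have hae : (fun t => t^q * p i t) =ᵐ[volume.restrict (Set.Ioi 0)]
      (fun t => G0 t + ((N:ℝ)-1) * ∑' k, F k t) := by
    filter_upwards [ae_restrict_mem measurableSet_Ioi] with t ht
    have htsum : ∑' k, F k t
        = t^q * ∑' k, (((N:ℝ)^(i+1+k))⁻¹ * Real.exp (-(θ * a^(i+1+k) * t))) := by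
      rw [← tsum_mul_left]
      exact tsum_congr fun k => by rw [hFdef]; ring
    rw [hp i t ht, hG0def, htsum]
    ring
  have hInt : Integrable (fun t => t^q * p i t) (volume.restrict (Set.Ioi 0)) :=
    (hG0int.add (htsumInt.const_mul ((N:ℝ)-1))).congr hae.symm
  refine ⟨hInt, ?_⟩
  rw [integral_congr_ae hae, integral_add hG0int (htsumInt.const_mul _)]
  simp only [hG0def]
  rw [integral_const_mul, integral_const_mul, ← hswap, (gammaAux q (hlampos i)).2]
  have hsum_val : ∑' k, ∫ t in Set.Ioi (0:ℝ), F k t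
      = (q.factorial:ℝ) * θ⁻¹^(q+1) * (r^(i+1) * (1-r)⁻¹) := by
    calc ∑' k, ∫ t in Set.Ioi (0:ℝ), F k t
        = ∑' k, ((q.factorial:ℝ) * (θ⁻¹^(q+1) * (r^(i+1) * r^k))) :=
          tsum_congr fun k => by rw [hFval k, pow_add r]
      _ = (q.factorial:ℝ) * (θ⁻¹^(q+1) * (r^(i+1) * ∑' k, r^k)) := by
          rw [tsum_mul_left, tsum_mul_left, tsum_mul_left]
      _ = _ := by rw [tsum_geometric_of_lt_one hr0.le hr1]; ring
  rw [hsum_val]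
  have e2 : ((N:ℝ)-1) / (σ * ((N:ℝ)^2/c - 1)) = θ⁻¹ := by
    rw [hθ, hb]
    have h1 : (N:ℝ) - 1 ≠ 0 := by linarith
    have h2 : (N:ℝ)^2/c - 1 ≠ 0 := ne_of_gt hNc
    field_simp
  have e3 : ((N:ℝ)-1) * (N:ℝ)^q / (c^(q+1) - (N:ℝ)^q) = ((N:ℝ)-1) * r / (1-r) := by
    have hc1 : (c:ℝ)^(q+1) ≠ 0 := ne_of_gt (pow_pos hc0 _)
    have hc2 : c^(q+1) - (N:ℝ)^q ≠ 0 := ne_of_gt (by linarith)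
    have hc3 : (1:ℝ) - r ≠ 0 := ne_of_gt (by linarith)
    rw [hrdef]
    field_simp
    try ring
  have h1 : ((N:ℝ)^i)⁻¹ * ((if i = 0 then (1:ℝ) else 0) - 1) *
      ((q.factorial:ℝ)/(θ*a^i)^(q+1))
      = ((if i = 0 then (1:ℝ) else 0) - 1) * ((q.factorial:ℝ) * (θ⁻¹^(q+1) * r^i)) := by
    rw [← hval i]; ring
  rw [h1, e3, e2]
  have hq : (q.factorial : ℝ) ≠ 0 := Nat.cast_ne_zero.2 (Nat.factorial_ne_zero q)
  have hc3 : (1:ℝ) - r ≠ 0 := ne_of_gt (by linarith)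
  have hθ' : θ ≠ 0 := ne_of_gt hθ0
  field_simp
  ring
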